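/- Let X ⊆ ℝⁿ be any subset and let h : X → ℝᵐ be a Lipschitz mapping. Then there exists a Lipschitz mapping H : ℝⁿ → ℝᵐ such that H restricted to X equals h. -/

import Mathlib

/-- McShane–Whitney–Kirszbraun: a Lipschitz map defined on a subset `X ⊆ ℝⁿ` with values
in `ℝᵐ` extends to a Lipschitz map on all of `ℝⁿ`. -/
theorem lipschitz_extension {n m : ℕ} (X : Set (EuclideanSpace ℝ (Fin n)))
    (h : EuclideanSpace ℝ (Fin n) → EuclideanSpace ℝ (Fin m))
    (C : ℝ) (hC : 0 < C)
    (hlip : ∀ x ∈ X, ∀ y ∈ X, ‖h x - h y‖ ≤ C * ‖x - y‖) :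
    ∃ H : EuclideanSpace ℝ (Fin n) → EuclideanSpace ℝ (Fin m),
      (∃ C' : ℝ, 0 < C' ∧ ∀ x y, ‖H x - H y‖ ≤ C' * ‖x - y‖) ∧
      ∀ x ∈ X, H x = h x := by
  set e := WithLp.equiv 2 (Fin m → ℝ)
  set f : EuclideanSpace ℝ (Fin n) → Fin m → ℝ := fun x => e (h x) with hf
  have hfl : LipschitzOnWith C.toNNReal f X := by
    apply LipschitzOnWith.of_dist_le_mul
    intro x hx y hy
    calc dist (f x) (f y) ≤ 1 * dist (h x) (h y) :=
          (PiLp.lipschitzWith_ofLp 2 (fun _ : Fin m => ℝ)).dist_le_mul (h x) (h y)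
      _ = ‖h x - h y‖ := by rw [one_mul, dist_eq_norm]
      _ ≤ C * ‖x - y‖ := hlip x hx y hy
      _ = C.toNNReal * dist x y := by
          rw [Real.coe_toNNReal C hC.le, dist_eq_norm]
  obtain ⟨g, hg, hgeq⟩ := hfl.extend_pi
  have ha := PiLp.antilipschitzWith_ofLp (2 : ENNReal) (fun _ : Fin m => ℝ)
  set K₀ := (Fintype.card (Fin m) : NNReal) ^ ((1 : ENNReal) / 2).toReal with hK₀
  refine ⟨fun x => e.symm (g x), ⟨(K₀ + 1) * C, by positivity, fun x y => ?_⟩, fun x hx => ?_⟩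
  · have h1 : dist (e.symm (g x)) (e.symm (g y)) ≤ K₀ * dist (g x) (g y) := by
      have := ha.le_mul_dist (e.symm (g x)) (e.symm (g y))
      exact this
    have h2 : dist (g x) (g y) ≤ C.toNNReal * dist x y := hg.dist_le_mul x y
    rw [← dist_eq_norm, ← dist_eq_norm]
    calc dist (e.symm (g x)) (e.symm (g y)) ≤ K₀ * (C.toNNReal * dist x y) :=
          h1.trans (by gcongr)
      _ = (K₀ * C) * dist x y := by rw [Real.coe_toNNReal C hC.le]; ring
      _ ≤ ((K₀ + 1) * C) * dist x y := by
          have : (K₀ : ℝ) ≤ K₀ + 1 := by linarith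
          gcongr
  · show e.symm (g x) = h x
    rw [← hgeq hx]
    simp [hf, e]
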